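/- Let J(E₀,β₁*) denote the Jacobian J₀ of the model at the disease-free equilibrium with the parameter β₁ replaced by β₁* = ω(ω+ω₁+m+r₁)(μ+ω+α)/(B(μ+ω)+(1−σ)αB). Then det(τI − J(E₀,β₁*)) = τ·(τ+ω)(τ+ω+α+μ)(τ+(ω+ω₂+r₂)(1−R₀₂))(τ+ω+δ); consequently 0 is an eigenvalue of J(E₀,β₁*), it is a simple eigenvalue whenever R₀₂ ≠ 1, and if R₀₂ < 1 all remaining eigenvalues are negative reals. -/

import Mathlib

open Matrix

lemma my_eval_charpoly {n : Type*} [DecidableEq n] [Fintype n] {R : Type*} [CommRing R]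
    (M : Matrix n n R) (t : R) :
    (M.charpoly).eval t = (t • (1 : Matrix n n R) - M).det := by
  rw [Matrix.charpoly, ← Polynomial.coe_evalRingHom, RingHom.map_det]
  congr 1
  ext i j
  by_cases h : i = j
  · subst h; simp [charmatrix_apply_eq, Matrix.one_apply]
  · simp [charmatrix_apply_ne _ _ _ h, Matrix.one_apply_ne h]

lemma my_root_aux {a : ℝ} (ha : a ≠ 0) :
    Polynomial.rootMultiplicity 0 (Polynomial.X + Polynomial.C a) = 0 :=
  Polynomial.rootMultiplicity_eq_zero (by simp [Polynomial.IsRoot, ha])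

set_option maxRecDepth 10000 in
set_option maxHeartbeats 2000000 in
theorem jacobian_beta1star_zero_eigenvalue
    (B ω β₂ α μ δ σ ω₁ ω₂ m r₁ r₂ : ℝ)
    (hB : 0 < B) (hω : 0 < ω) (hβ₂ : 0 < β₂) (hα : 0 < α)
    (hμ : 0 < μ) (hδ : 0 < δ) (hσ : σ ∈ Set.Ioo (0 : ℝ) 1)
    (hω₁ : 0 < ω₁) (hω₂ : 0 < ω₂) (hm : 0 < m) (hr₁ : 0 < r₁) (hr₂ : 0 < r₂)
    (S₀ V₀ R₀₂ β₁star : ℝ)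
    (hS₀ : S₀ = B * (μ + ω) / (ω * (μ + ω + α)))
    (hV₀ : V₀ = α * B / (ω * (μ + ω + α)))
    (hR₀₂ : R₀₂ = β₂ * (B * (μ + ω) + (1 - σ) * α * B) /
      ((ω + ω₂ + r₂) * ω * (μ + ω + α)))
    (hβ₁star : β₁star = ω * (ω + ω₁ + m + r₁) * (μ + ω + α) /
      (B * (μ + ω) + (1 - σ) * α * B))
    (J : Matrix (Fin 5) (Fin 5) ℝ)
    (hJ : J =
      !![-ω - α, μ, -β₁star * S₀, -β₂ * S₀, δ;
         α, -ω - μ, -(1 - σ) * β₁star * V₀, -(1 - σ) * β₂ * V₀, 0;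
         0, 0, -(ω + ω₁ + m + r₁) + β₁star * (S₀ + (1 - σ) * V₀), 0, 0;
         0, 0, m, -(ω + ω₂ + r₂) + β₂ * (S₀ + (1 - σ) * V₀), 0;
         0, 0, r₁, r₂, -ω - δ]) :
    (∀ τ : ℝ,
      (τ • (1 : Matrix (Fin 5) (Fin 5) ℝ) - J).det =
        τ * ((τ + ω) * (τ + ω + α + μ) * (τ + (ω + ω₂ + r₂) * (1 - R₀₂)) *
          (τ + ω + δ))) ∧
    (0 : ℝ) ∈ spectrum ℝ J ∧
    (R₀₂ ≠ 1 → (Matrix.charpoly J).roots.count 0 = 1) ∧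
    (R₀₂ < 1 → ∀ τ : ℂ, τ ∈ spectrum ℂ (J.map (Complex.ofReal ·)) → τ ≠ 0 →
      τ.im = 0 ∧ τ.re < 0) := by
  obtain ⟨hσ0, hσ1⟩ := hσ
  have hden1 : ω * (μ + ω + α) ≠ 0 := by positivity
  have hden2 : B * (μ + ω) + (1 - σ) * α * B ≠ 0 := by
    have : 0 < 1 - σ := by linarith
    positivity
  have hden3 : (ω + ω₂ + r₂) * ω * (μ + ω + α) ≠ 0 := by positivity
  have h1 : β₁star * (S₀ + (1 - σ) * V₀) = ω + ω₁ + m + r₁ := by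
    subst hβ₁star hS₀ hV₀; field_simp
  have h2 : β₂ * (S₀ + (1 - σ) * V₀) = (ω + ω₂ + r₂) * R₀₂ := by
    subst hR₀₂ hS₀ hV₀; field_simp
  set c : ℝ := (ω + ω₂ + r₂) * (1 - R₀₂) with hc
  have hdet : ∀ τ : ℝ, (τ • (1 : Matrix (Fin 5) (Fin 5) ℝ) - J).det =
      τ * ((τ + ω) * (τ + ω + α + μ) * (τ + c) * (τ + ω + δ)) := by
    intro τ
    have hM : τ • (1 : Matrix (Fin 5) (Fin 5) ℝ) - J =
        !![τ + ω + α, -μ, β₁star * S₀, β₂ * S₀, -δ;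
           -α, τ + ω + μ, (1 - σ) * β₁star * V₀, (1 - σ) * β₂ * V₀, 0;
           0, 0, τ, 0, 0;
           0, 0, -m, τ + c, 0;
           0, 0, -r₁, -r₂, τ + ω + δ] := by
      subst hJ
      ext i j
      fin_cases i <;> fin_cases j <;>
        simp [Matrix.one_apply, Matrix.vecHead, Matrix.vecTail, h1, h2, hc] <;> ring
    rw [hM]
    simp [Matrix.det_succ_row_zero, Fin.sum_univ_succ, Fin.succAbove]
    ring
  have hgoal1 : ∀ τ : ℝ,
      (τ • (1 : Matrix (Fin 5) (Fin 5) ℝ) - J).det =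
        τ * ((τ + ω) * (τ + ω + α + μ) * (τ + (ω + ω₂ + r₂) * (1 - R₀₂)) *
          (τ + ω + δ)) := by
    intro τ; exact hdet τ
  have hP : J.charpoly =
      Polynomial.X * (Polynomial.X + Polynomial.C ω) *
        (Polynomial.X + Polynomial.C (ω + α + μ)) *
        (Polynomial.X + Polynomial.C c) *
        (Polynomial.X + Polynomial.C (ω + δ)) := by
    apply Polynomial.funext
    intro τ
    rw [my_eval_charpoly, hdet τ]
    simp
    ring
  refine ⟨hgoal1, ?_, ?_, ?_⟩
  · rw [spectrum.mem_iff]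
    intro h
    rw [map_zero, zero_sub] at h
    have hd := (Matrix.isUnit_iff_isUnit_det _).mp h
    have h0 := hdet 0
    rw [zero_smul, zero_sub] at h0
    rw [h0] at hd
    simp at hd
  · intro hR
    have hc0 : c ≠ 0 := by
      have : (1 : ℝ) - R₀₂ ≠ 0 := fun h => hR (by linarith)
      have hp : (0:ℝ) < ω + ω₂ + r₂ := by positivity
      exact mul_ne_zero (ne_of_gt hp) this
    rw [Polynomial.count_roots, hP]
    have nX : (Polynomial.X : Polynomial ℝ) ≠ 0 := Polynomial.X_ne_zero
    have n1 := (Polynomial.monic_X_add_C ω).ne_zero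
    have n2 := (Polynomial.monic_X_add_C (ω + α + μ)).ne_zero
    have n3 := (Polynomial.monic_X_add_C c).ne_zero
    have n4 := (Polynomial.monic_X_add_C (ω + δ)).ne_zero
    rw [Polynomial.rootMultiplicity_mul
        (mul_ne_zero (mul_ne_zero (mul_ne_zero (mul_ne_zero nX n1) n2) n3) n4),
      Polynomial.rootMultiplicity_mul
        (mul_ne_zero (mul_ne_zero (mul_ne_zero nX n1) n2) n3),
      Polynomial.rootMultiplicity_mul (mul_ne_zero (mul_ne_zero nX n1) n2),
      Polynomial.rootMultiplicity_mul (mul_ne_zero nX n1)]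
    have hX : Polynomial.rootMultiplicity (0:ℝ) Polynomial.X = 1 := by
      rw [show (Polynomial.X : Polynomial ℝ) = Polynomial.X - Polynomial.C 0 by simp]
      exact Polynomial.rootMultiplicity_X_sub_C_self
    rw [hX, my_root_aux hω.ne',
      my_root_aux (show (0:ℝ) < ω + α + μ by positivity).ne',
      my_root_aux hc0,
      my_root_aux (show (0:ℝ) < ω + δ by positivity).ne']
  · intro hR τ hτ hτ0
    have hc0 : (0:ℝ) < c := by
      have : (0:ℝ) < 1 - R₀₂ := by linarith
      positivity
    rw [spectrum.mem_iff] at hτ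
    have hdC : (τ • (1 : Matrix (Fin 5) (Fin 5) ℂ) - J.map (Complex.ofReal ·)).det = 0 := by
      by_contra hne
      apply hτ
      rw [Algebra.algebraMap_eq_smul_one, Matrix.isUnit_iff_isUnit_det]
      exact isUnit_iff_ne_zero.mpr hne
    have hmap : (J.map (Complex.ofReal ·)).charpoly
        = (J.charpoly).map Complex.ofRealHom :=
      Matrix.charpoly_map J Complex.ofRealHom
    have heval := my_eval_charpoly (J.map (Complex.ofReal ·)) τ
    rw [hdC, hmap, hP] at heval
    simp [Polynomial.eval_map] at heval
    rcases heval with (((h | h) | h) | h) | h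
    · exact absurd h hτ0
    · have hτ' : τ = -(ω : ℂ) := by linear_combination h
      exact ⟨by simp [hτ'], by rw [hτ']; simp; linarith⟩
    · have hτ' : τ = -((ω : ℂ) + α + μ) := by linear_combination h
      refine ⟨by simp [hτ'], ?_⟩
      rw [hτ']; simp; linarith
    · have hτ' : τ = -(c : ℂ) := by linear_combination h
      exact ⟨by simp [hτ'], by rw [hτ']; simp; linarith⟩
    · have hτ' : τ = -((ω : ℂ) + δ) := by linear_combination h
      refine ⟨by simp [hτ'], ?_⟩
      rw [hτ']; simp; linarith
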